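/- Under the assumptions of the two-proxy setting (Theorem 3), the conditional potential outcome mean satisfies E[min_{w,z} p(w,z | a, X)/(p(w | a, X)·p(z | a, X)) · E[Y | A=a, X] | A=1−a] ≤ E[Y^(a) | A=1−a] ≤ E[max_{w,z} p(w,z | a, X)/(p(w | a, X)·p(z | a, X)) · E[Y | A=a, X] | A=1−a]. -/

import Mathlib

open Finset Real
open scoped Classical

/-- Probability of an event under a pmf `P` on a finite sample space. -/
noncomputable def pr {Ω : Type*} [Fintype Ω] (P : Ω → ℝ) (E : Ω → Prop) : ℝ :=
  ∑ ω, if E ω then P ω else 0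

/-- Expectation of `f` under `P`. -/
noncomputable def ex {Ω : Type*} [Fintype Ω] (P : Ω → ℝ) (f : Ω → ℝ) : ℝ :=
  ∑ ω, P ω * f ω

/-- Conditional expectation `E[f | E]`. -/
noncomputable def ce {Ω : Type*} [Fintype Ω] (P : Ω → ℝ) (f : Ω → ℝ) (E : Ω → Prop) : ℝ :=
  (∑ ω, if E ω then P ω * f ω else 0) / pr P E

/-- Conditional probability `P(E | F)`. -/
noncomputable def cpr {Ω : Type*} [Fintype Ω] (P : Ω → ℝ) (E F : Ω → Prop) : ℝ :=
  pr P (fun ω => E ω ∧ F ω) / pr P F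

noncomputable def sEx {Ω : Type*} [Fintype Ω] (P : Ω → ℝ) (f : Ω → ℝ) (E : Ω → Prop) : ℝ :=
  ∑ ω, if E ω then P ω * f ω else 0

section helpers
variable {Ω : Type*} [Fintype Ω] (P : Ω → ℝ)

lemma ce_def (f : Ω → ℝ) (E : Ω → Prop) : ce P f E = sEx P f E / pr P E := rfl

lemma ce_mul_pr (f : Ω → ℝ) (E : Ω → Prop) (hp : pr P E ≠ 0) :
    ce P f E * pr P E = sEx P f E := div_mul_cancel₀ _ hp

lemma pr_congr {E F : Ω → Prop} (h : ∀ ω, E ω ↔ F ω) : pr P E = pr P F := by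
  unfold pr; exact Finset.sum_congr rfl fun ω _ => if_congr (h ω) rfl rfl

lemma sEx_congr (f : Ω → ℝ) {E F : Ω → Prop} (h : ∀ ω, E ω ↔ F ω) :
    sEx P f E = sEx P f F := by
  unfold sEx; exact Finset.sum_congr rfl fun ω _ => if_congr (h ω) rfl rfl

lemma sEx_congr_fun (f g : Ω → ℝ) {E : Ω → Prop} (h : ∀ ω, E ω → f ω = g ω) :
    sEx P f E = sEx P g E := by
  unfold sEx
  refine Finset.sum_congr rfl fun ω _ => ?_
  by_cases hE : E ω <;> simp [hE]
  exact Or.inl (h ω hE)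

lemma pr_nonneg (hP : ∀ ω, 0 ≤ P ω) (E : Ω → Prop) : 0 ≤ pr P E := by
  unfold pr
  exact Finset.sum_nonneg fun ω _ => by by_cases hE : E ω <;> simp [hE, hP ω]

lemma pr_mono (hP : ∀ ω, 0 ≤ P ω) {E F : Ω → Prop} (h : ∀ ω, E ω → F ω) :
    pr P E ≤ pr P F := by
  unfold pr
  refine Finset.sum_le_sum fun ω _ => ?_
  by_cases hE : E ω
  · simp [hE, h ω hE]
  · by_cases hF : F ω <;> simp [hE, hF, hP ω]

lemma sEx_nonneg (hP : ∀ ω, 0 ≤ P ω) {f : Ω → ℝ} (hf : ∀ ω, 0 ≤ f ω) (E : Ω → Prop) :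
    0 ≤ sEx P f E := by
  unfold sEx
  exact Finset.sum_nonneg fun ω _ => by
    by_cases hE : E ω <;> simp [hE]; exact mul_nonneg (hP ω) (hf ω)

lemma pr_fiber {I : Type*} [Fintype I] (g : Ω → I) (E : Ω → Prop) :
    pr P E = ∑ i, pr P (fun ω => g ω = i ∧ E ω) := by
  unfold pr
  rw [Finset.sum_comm]
  refine Finset.sum_congr rfl fun ω _ => ?_
  by_cases hE : E ω <;> simp [hE, Finset.sum_ite_eq]

lemma sEx_fiber {I : Type*} [Fintype I] (g : Ω → I) (f : Ω → ℝ) (E : Ω → Prop) :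
    sEx P f E = ∑ i, sEx P f (fun ω => g ω = i ∧ E ω) := by
  unfold sEx
  rw [Finset.sum_comm]
  refine Finset.sum_congr rfl fun ω _ => ?_
  by_cases hE : E ω <;> simp [hE, Finset.sum_ite_eq]

lemma sEx_const {f : Ω → ℝ} {E : Ω → Prop} {c : ℝ}
    (hc : ∀ ω, E ω → f ω = c) : sEx P f E = c * pr P E := by
  unfold sEx pr
  rw [Finset.mul_sum]
  refine Finset.sum_congr rfl fun ω _ => ?_
  by_cases hE : E ω <;> simp [hE]
  rw [hc ω hE]; ring

lemma sEx_value (f : Ω → ℝ) (E : Ω → Prop) :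
    sEx P f E = ∑ y ∈ Finset.image f Finset.univ,
      y * pr P (fun ω => f ω = y ∧ E ω) := by
  unfold sEx pr
  simp_rw [Finset.mul_sum]
  rw [Finset.sum_comm]
  refine Finset.sum_congr rfl fun ω _ => ?_
  by_cases hE : E ω
  · simp only [hE, and_true, mul_ite, mul_zero, if_true]
    rw [Finset.sum_ite_eq (Finset.image f Finset.univ) (f ω) (fun y => y * P ω)]
    simp [Finset.mem_image, mul_comm]
  · simp [hE]

end helpers

/-- Theorem 3: two-proxy partial identification bounds on
`E[Y^(a) | A=1−a]` via the odds ratio `p(w,z | a,X)/(p(w | a,X)·p(z | a,X))`. -/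
theorem two_proxy_bounds {Ω U X W Z : Type*} [Fintype Ω] [Fintype U] [Fintype X]
    [Fintype W] [Fintype Z] [Nonempty W] [Nonempty Z]
    (P : Ω → ℝ) (hP : ∀ ω, 0 ≤ P ω) (hP1 : ∑ ω, P ω = 1)
    (Uv : Ω → U) (Xv : Ω → X) (Wv : Ω → W) (Zv : Ω → Z) (Av : Ω → Bool) (Yv : Ω → ℝ)
    (a : Bool) (Ya : Ω → ℝ)
    (hY : ∀ ω, 0 ≤ Yv ω)
    -- (i) Y^(a) ⟂ A | (X,U)
    (hYaA : ∀ (y : ℝ) (a' : Bool) (x : X) (u : U),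
      pr P (fun ω => Ya ω = y ∧ Av ω = a' ∧ Xv ω = x ∧ Uv ω = u) *
          pr P (fun ω => Xv ω = x ∧ Uv ω = u) =
        pr P (fun ω => Ya ω = y ∧ Xv ω = x ∧ Uv ω = u) *
          pr P (fun ω => Av ω = a' ∧ Xv ω = x ∧ Uv ω = u))
    -- positivity
    (hpos : ∀ (a' : Bool) (x : X) (u : U),
      0 < pr P fun ω => Av ω = a' ∧ Xv ω = x ∧ Uv ω = u)
    -- consistency
    (hcons : ∀ ω, Av ω = a → Yv ω = Ya ω)
    -- (ii) outcome bridge function h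
    (h : W → Bool → X → ℝ) (hh : ∀ w a' x, 0 ≤ h w a' x)
    (hbridgeh : ∀ (a' : Bool) (x : X) (u : U),
      ce P Yv (fun ω => Av ω = a' ∧ Xv ω = x ∧ Uv ω = u) =
        ce P (fun ω => h (Wv ω) a' (Xv ω)) (fun ω => Av ω = a' ∧ Xv ω = x ∧ Uv ω = u))
    -- (iii) treatment bridge function q
    (q : Z → Bool → X → ℝ) (hq : ∀ z a' x, 0 ≤ q z a' x)
    (hbridgeq : ∀ (a' : Bool) (x : X) (u : U),
      ce P (fun ω => q (Zv ω) a' (Xv ω)) (fun ω => Av ω = a' ∧ Xv ω = x ∧ Uv ω = u) =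
        cpr P (fun ω => Uv ω = u) (fun ω => Av ω = !a' ∧ Xv ω = x) /
          cpr P (fun ω => Uv ω = u) (fun ω => Av ω = a' ∧ Xv ω = x))
    -- (iv) W ⟂ Z | (A, X, U)
    (hWZ : ∀ (w : W) (z : Z) (a' : Bool) (x : X) (u : U),
      pr P (fun ω => Wv ω = w ∧ Zv ω = z ∧ Av ω = a' ∧ Xv ω = x ∧ Uv ω = u) *
          pr P (fun ω => Av ω = a' ∧ Xv ω = x ∧ Uv ω = u) =
        pr P (fun ω => Wv ω = w ∧ Av ω = a' ∧ Xv ω = x ∧ Uv ω = u) *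
          pr P (fun ω => Zv ω = z ∧ Av ω = a' ∧ Xv ω = x ∧ Uv ω = u)) :
    (∑ x : X,
        (univ.inf' univ_nonempty fun wz : W × Z =>
            cpr P (fun ω => Wv ω = wz.1 ∧ Zv ω = wz.2) (fun ω => Av ω = a ∧ Xv ω = x) /
              (cpr P (fun ω => Wv ω = wz.1) (fun ω => Av ω = a ∧ Xv ω = x) *
                cpr P (fun ω => Zv ω = wz.2) (fun ω => Av ω = a ∧ Xv ω = x))) *
          ce P Yv (fun ω => Av ω = a ∧ Xv ω = x) *
          cpr P (fun ω => Xv ω = x) (fun ω => Av ω = !a)) ≤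
      ce P Ya (fun ω => Av ω = !a) ∧
    ce P Ya (fun ω => Av ω = !a) ≤
      ∑ x : X,
        (univ.sup' univ_nonempty fun wz : W × Z =>
            cpr P (fun ω => Wv ω = wz.1 ∧ Zv ω = wz.2) (fun ω => Av ω = a ∧ Xv ω = x) /
              (cpr P (fun ω => Wv ω = wz.1) (fun ω => Av ω = a ∧ Xv ω = x) *
                cpr P (fun ω => Zv ω = wz.2) (fun ω => Av ω = a ∧ Xv ω = x))) *
          ce P Yv (fun ω => Av ω = a ∧ Xv ω = x) *
          cpr P (fun ω => Xv ω = x) (fun ω => Av ω = !a) := by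
  
  classical
  have hΩ : Nonempty Ω := by
    by_contra hempty
    rw [not_nonempty_iff] at hempty
    rw [Finset.univ_eq_empty, Finset.sum_empty] at hP1
    exact one_ne_zero hP1.symm
  obtain ⟨ω0⟩ := hΩ
  have hposxu : ∀ (x : X) (u : U), 0 < pr P (fun ω => Xv ω = x ∧ Uv ω = u) :=
    fun x u => lt_of_lt_of_le (hpos a x u) (pr_mono P hP fun ω hE => ⟨hE.2.1, hE.2.2⟩)
  have hposax : ∀ (a' : Bool) (x : X), 0 < pr P (fun ω => Av ω = a' ∧ Xv ω = x) :=
    fun a' x => lt_of_lt_of_le (hpos a' x (Uv ω0)) (pr_mono P hP fun ω hE => ⟨hE.1, hE.2.1⟩)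
  have hposA : 0 < pr P (fun ω => Av ω = !a) :=
    lt_of_lt_of_le (hposax (!a) (Xv ω0)) (pr_mono P hP fun ω hE => hE.1)
  -- Step A1: conditional independence of Ya and A given (X,U), in expectation form
  have hA1 : ∀ (a' : Bool) (x : X) (u : U),
      sEx P Ya (fun ω => Av ω = a' ∧ Xv ω = x ∧ Uv ω = u) *
        pr P (fun ω => Xv ω = x ∧ Uv ω = u) =
      sEx P Ya (fun ω => Xv ω = x ∧ Uv ω = u) *
        pr P (fun ω => Av ω = a' ∧ Xv ω = x ∧ Uv ω = u) := by
    intro a' x u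
    rw [sEx_value P Ya (fun ω => Av ω = a' ∧ Xv ω = x ∧ Uv ω = u),
        sEx_value P Ya (fun ω => Xv ω = x ∧ Uv ω = u),
        Finset.sum_mul, Finset.sum_mul]
    refine Finset.sum_congr rfl fun y _ => ?_
    have hy := hYaA y a' x u
    calc y * pr P (fun ω => Ya ω = y ∧ Av ω = a' ∧ Xv ω = x ∧ Uv ω = u) *
          pr P (fun ω => Xv ω = x ∧ Uv ω = u)
        = y * (pr P (fun ω => Ya ω = y ∧ Av ω = a' ∧ Xv ω = x ∧ Uv ω = u) *
            pr P (fun ω => Xv ω = x ∧ Uv ω = u)) := by ring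
      _ = y * (pr P (fun ω => Ya ω = y ∧ Xv ω = x ∧ Uv ω = u) *
            pr P (fun ω => Av ω = a' ∧ Xv ω = x ∧ Uv ω = u)) := by rw [hy]
      _ = y * pr P (fun ω => Ya ω = y ∧ Xv ω = x ∧ Uv ω = u) *
            pr P (fun ω => Av ω = a' ∧ Xv ω = x ∧ Uv ω = u) := by ring
  have hA2 : ∀ (x : X) (u : U),
      sEx P Ya (fun ω => Av ω = !a ∧ Xv ω = x ∧ Uv ω = u) *
        pr P (fun ω => Av ω = a ∧ Xv ω = x ∧ Uv ω = u) =
      sEx P Ya (fun ω => Av ω = a ∧ Xv ω = x ∧ Uv ω = u) *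
        pr P (fun ω => Av ω = !a ∧ Xv ω = x ∧ Uv ω = u) := by
    intro x u
    have e1 := hA1 (!a) x u
    have e2 := hA1 a x u
    apply mul_right_cancel₀ (hposxu x u).ne'
    linear_combination pr P (fun ω => Av ω = a ∧ Xv ω = x ∧ Uv ω = u) * e1 -
      pr P (fun ω => Av ω = !a ∧ Xv ω = x ∧ Uv ω = u) * e2
  have hA3 : ∀ (x : X) (u : U),
      sEx P Ya (fun ω => Av ω = a ∧ Xv ω = x ∧ Uv ω = u) =
      sEx P Yv (fun ω => Av ω = a ∧ Xv ω = x ∧ Uv ω = u) :=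
    fun x u => (sEx_congr_fun P Yv Ya fun ω hE => hcons ω hE.1).symm
  have hA4 : ∀ (x : X) (u : U),
      sEx P Yv (fun ω => Av ω = a ∧ Xv ω = x ∧ Uv ω = u) =
      sEx P (fun ω => h (Wv ω) a x) (fun ω => Av ω = a ∧ Xv ω = x ∧ Uv ω = u) := by
    intro x u
    have hp := (hpos a x u).ne'
    calc sEx P Yv (fun ω => Av ω = a ∧ Xv ω = x ∧ Uv ω = u)
        = ce P Yv (fun ω => Av ω = a ∧ Xv ω = x ∧ Uv ω = u) *
            pr P (fun ω => Av ω = a ∧ Xv ω = x ∧ Uv ω = u) := (ce_mul_pr P _ _ hp).symm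
      _ = ce P (fun ω => h (Wv ω) a (Xv ω)) (fun ω => Av ω = a ∧ Xv ω = x ∧ Uv ω = u) *
            pr P (fun ω => Av ω = a ∧ Xv ω = x ∧ Uv ω = u) := by rw [hbridgeh a x u]
      _ = sEx P (fun ω => h (Wv ω) a (Xv ω)) (fun ω => Av ω = a ∧ Xv ω = x ∧ Uv ω = u) :=
            ce_mul_pr P _ _ hp
      _ = sEx P (fun ω => h (Wv ω) a x) (fun ω => Av ω = a ∧ Xv ω = x ∧ Uv ω = u) :=
            sEx_congr_fun P _ _ fun ω hE => by rw [hE.2.1]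
  -- Step A5 : E[h(W) q(Z) | a,x,u] * p(a,x,u) = E[h(W)|a,x,u] E[q(Z)|a,x,u] (unnormalized)
  have hA5 : ∀ (x : X) (u : U),
      sEx P (fun ω => h (Wv ω) a x * q (Zv ω) a x)
          (fun ω => Av ω = a ∧ Xv ω = x ∧ Uv ω = u) *
        pr P (fun ω => Av ω = a ∧ Xv ω = x ∧ Uv ω = u) =
      sEx P (fun ω => h (Wv ω) a x) (fun ω => Av ω = a ∧ Xv ω = x ∧ Uv ω = u) *
      sEx P (fun ω => q (Zv ω) a x) (fun ω => Av ω = a ∧ Xv ω = x ∧ Uv ω = u) := by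
    intro x u
    have lhs_eq : sEx P (fun ω => h (Wv ω) a x * q (Zv ω) a x)
        (fun ω => Av ω = a ∧ Xv ω = x ∧ Uv ω = u) =
        ∑ w, ∑ z, h w a x * q z a x *
          pr P (fun ω => Wv ω = w ∧ Zv ω = z ∧ Av ω = a ∧ Xv ω = x ∧ Uv ω = u) := by
      rw [sEx_fiber P Wv _ (fun ω => Av ω = a ∧ Xv ω = x ∧ Uv ω = u)]
      refine Finset.sum_congr rfl fun w _ => ?_
      rw [sEx_fiber P Zv]
      refine Finset.sum_congr rfl fun z _ => ?_
      refine (sEx_congr P _ (F := fun ω => Wv ω = w ∧ Zv ω = z ∧ Av ω = a ∧ Xv ω = x ∧ Uv ω = u)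
        (fun ω => by tauto)).trans ?_
      exact sEx_const P fun ω hE => by rw [hE.1, hE.2.1]
    have hW_eq : sEx P (fun ω => h (Wv ω) a x) (fun ω => Av ω = a ∧ Xv ω = x ∧ Uv ω = u) =
        ∑ w, h w a x * pr P (fun ω => Wv ω = w ∧ Av ω = a ∧ Xv ω = x ∧ Uv ω = u) := by
      rw [sEx_fiber P Wv]
      exact Finset.sum_congr rfl fun w _ => sEx_const P fun ω hE => by rw [hE.1]
    have hZ_eq : sEx P (fun ω => q (Zv ω) a x) (fun ω => Av ω = a ∧ Xv ω = x ∧ Uv ω = u) =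
        ∑ z, q z a x * pr P (fun ω => Zv ω = z ∧ Av ω = a ∧ Xv ω = x ∧ Uv ω = u) := by
      rw [sEx_fiber P Zv]
      exact Finset.sum_congr rfl fun z _ => sEx_const P fun ω hE => by rw [hE.1]
    rw [lhs_eq, hW_eq, hZ_eq, Finset.sum_mul_sum, Finset.sum_mul]
    refine Finset.sum_congr rfl fun w _ => ?_
    rw [Finset.sum_mul]
    refine Finset.sum_congr rfl fun z _ => ?_
    linear_combination (h w a x * q z a x) * hWZ w z a x u
  -- Step A6 : treatment bridge, unnormalized form
  have hA6 : ∀ (x : X) (u : U),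
      sEx P (fun ω => q (Zv ω) a x) (fun ω => Av ω = a ∧ Xv ω = x ∧ Uv ω = u) *
        pr P (fun ω => Av ω = !a ∧ Xv ω = x) =
      pr P (fun ω => Av ω = !a ∧ Xv ω = x ∧ Uv ω = u) *
        pr P (fun ω => Av ω = a ∧ Xv ω = x) := by
    intro x u
    have hb := hbridgeq a x u
    have e1 : cpr P (fun ω => Uv ω = u) (fun ω => Av ω = !a ∧ Xv ω = x) =
        pr P (fun ω => Av ω = !a ∧ Xv ω = x ∧ Uv ω = u) /
          pr P (fun ω => Av ω = !a ∧ Xv ω = x) := by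
      unfold cpr
      rw [pr_congr P (E := fun ω => Uv ω = u ∧ (Av ω = !a ∧ Xv ω = x))
        (F := fun ω => Av ω = !a ∧ Xv ω = x ∧ Uv ω = u) (fun ω => by tauto)]
    have e2 : cpr P (fun ω => Uv ω = u) (fun ω => Av ω = a ∧ Xv ω = x) =
        pr P (fun ω => Av ω = a ∧ Xv ω = x ∧ Uv ω = u) /
          pr P (fun ω => Av ω = a ∧ Xv ω = x) := by
      unfold cpr
      rw [pr_congr P (E := fun ω => Uv ω = u ∧ (Av ω = a ∧ Xv ω = x))
        (F := fun ω => Av ω = a ∧ Xv ω = x ∧ Uv ω = u) (fun ω => by tauto)]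
    rw [e1, e2] at hb
    have hq' : sEx P (fun ω => q (Zv ω) a (Xv ω)) (fun ω => Av ω = a ∧ Xv ω = x ∧ Uv ω = u) =
        sEx P (fun ω => q (Zv ω) a x) (fun ω => Av ω = a ∧ Xv ω = x ∧ Uv ω = u) :=
      sEx_congr_fun P _ _ fun ω hE => by rw [hE.2.1]
    have hb' : sEx P (fun ω => q (Zv ω) a x) (fun ω => Av ω = a ∧ Xv ω = x ∧ Uv ω = u) /
        pr P (fun ω => Av ω = a ∧ Xv ω = x ∧ Uv ω = u) =
        pr P (fun ω => Av ω = !a ∧ Xv ω = x ∧ Uv ω = u) /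
            pr P (fun ω => Av ω = !a ∧ Xv ω = x) /
          (pr P (fun ω => Av ω = a ∧ Xv ω = x ∧ Uv ω = u) /
            pr P (fun ω => Av ω = a ∧ Xv ω = x)) := by
      rw [← hq']; exact hb
    have n1 := (hpos a x u).ne'
    have n2 := (hposax (!a) x).ne'
    have n3 := (hposax a x).ne'
    field_simp at hb'
    linear_combination hb'
  -- Step A: combine
  have stepA : ∀ (x : X) (u : U),
      sEx P Ya (fun ω => Av ω = !a ∧ Xv ω = x ∧ Uv ω = u) =
      sEx P (fun ω => h (Wv ω) a x * q (Zv ω) a x)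
          (fun ω => Av ω = a ∧ Xv ω = x ∧ Uv ω = u) *
        (pr P (fun ω => Av ω = !a ∧ Xv ω = x) / pr P (fun ω => Av ω = a ∧ Xv ω = x)) := by
    intro x u
    have n_u := (hpos a x u).ne'
    have n2 := (hposax (!a) x).ne'
    have n3 := (hposax a x).ne'
    have key : sEx P Ya (fun ω => Av ω = !a ∧ Xv ω = x ∧ Uv ω = u) *
        pr P (fun ω => Av ω = a ∧ Xv ω = x) =
        sEx P (fun ω => h (Wv ω) a x * q (Zv ω) a x)
            (fun ω => Av ω = a ∧ Xv ω = x ∧ Uv ω = u) *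
          pr P (fun ω => Av ω = !a ∧ Xv ω = x) := by
      apply mul_right_cancel₀ (mul_ne_zero n_u n2)
      linear_combination
        (pr P (fun ω => Av ω = a ∧ Xv ω = x) * pr P (fun ω => Av ω = !a ∧ Xv ω = x)) * hA2 x u +
        (pr P (fun ω => Av ω = a ∧ Xv ω = x) * pr P (fun ω => Av ω = !a ∧ Xv ω = x) *
          pr P (fun ω => Av ω = !a ∧ Xv ω = x ∧ Uv ω = u)) * (hA3 x u) +
        (pr P (fun ω => Av ω = a ∧ Xv ω = x) * pr P (fun ω => Av ω = !a ∧ Xv ω = x) *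
          pr P (fun ω => Av ω = !a ∧ Xv ω = x ∧ Uv ω = u)) * (hA4 x u) -
        (pr P (fun ω => Av ω = !a ∧ Xv ω = x))^2 * hA5 x u -
        (pr P (fun ω => Av ω = !a ∧ Xv ω = x) *
          sEx P (fun ω => h (Wv ω) a x) (fun ω => Av ω = a ∧ Xv ω = x ∧ Uv ω = u)) * hA6 x u
    field_simp
    linear_combination key
  -- Step B: sum over u
  have hB : ∀ (x : X),
      sEx P Ya (fun ω => Av ω = !a ∧ Xv ω = x) =
      sEx P (fun ω => h (Wv ω) a x * q (Zv ω) a x) (fun ω => Av ω = a ∧ Xv ω = x) *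
        (pr P (fun ω => Av ω = !a ∧ Xv ω = x) / pr P (fun ω => Av ω = a ∧ Xv ω = x)) := by
    intro x
    calc sEx P Ya (fun ω => Av ω = !a ∧ Xv ω = x)
        = ∑ u, sEx P Ya (fun ω => Av ω = !a ∧ Xv ω = x ∧ Uv ω = u) := by
          rw [sEx_fiber P Uv Ya (fun ω => Av ω = !a ∧ Xv ω = x)]
          exact Finset.sum_congr rfl fun u _ => sEx_congr P Ya (fun ω => by tauto)
      _ = ∑ u, sEx P (fun ω => h (Wv ω) a x * q (Zv ω) a x)
              (fun ω => Av ω = a ∧ Xv ω = x ∧ Uv ω = u) *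
            (pr P (fun ω => Av ω = !a ∧ Xv ω = x) / pr P (fun ω => Av ω = a ∧ Xv ω = x)) :=
          Finset.sum_congr rfl fun u _ => stepA x u
      _ = (∑ u, sEx P (fun ω => h (Wv ω) a x * q (Zv ω) a x)
              (fun ω => Av ω = a ∧ Xv ω = x ∧ Uv ω = u)) *
            (pr P (fun ω => Av ω = !a ∧ Xv ω = x) / pr P (fun ω => Av ω = a ∧ Xv ω = x)) :=
          (Finset.sum_mul _ _ _).symm
      _ = sEx P (fun ω => h (Wv ω) a x * q (Zv ω) a x) (fun ω => Av ω = a ∧ Xv ω = x) *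
            (pr P (fun ω => Av ω = !a ∧ Xv ω = x) / pr P (fun ω => Av ω = a ∧ Xv ω = x)) := by
          congr 1
          rw [sEx_fiber P Uv _ (fun ω => Av ω = a ∧ Xv ω = x)]
          exact (Finset.sum_congr rfl fun u _ => sEx_congr P _ (fun ω => by tauto)).symm
  -- marginalization representations
  have hSh : ∀ x : X, sEx P (fun ω => h (Wv ω) a x) (fun ω => Av ω = a ∧ Xv ω = x) =
      ∑ w, h w a x * pr P (fun ω => Wv ω = w ∧ Av ω = a ∧ Xv ω = x) := by
    intro x
    rw [sEx_fiber P Wv]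
    exact Finset.sum_congr rfl fun w _ => sEx_const P fun ω hE => by rw [hE.1]
  have hSq : ∀ x : X, sEx P (fun ω => q (Zv ω) a x) (fun ω => Av ω = a ∧ Xv ω = x) =
      ∑ z, q z a x * pr P (fun ω => Zv ω = z ∧ Av ω = a ∧ Xv ω = x) := by
    intro x
    rw [sEx_fiber P Zv]
    exact Finset.sum_congr rfl fun z _ => sEx_const P fun ω hE => by rw [hE.1]
  have hc4 : ∀ x : X, sEx P (fun ω => h (Wv ω) a x) (fun ω => Av ω = a ∧ Xv ω = x) =
      sEx P Yv (fun ω => Av ω = a ∧ Xv ω = x) := by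
    intro x
    rw [sEx_fiber P Uv _ (fun ω => Av ω = a ∧ Xv ω = x),
        sEx_fiber P Uv Yv (fun ω => Av ω = a ∧ Xv ω = x)]
    refine Finset.sum_congr rfl fun u _ => ?_
    calc sEx P (fun ω => h (Wv ω) a x) (fun ω => Uv ω = u ∧ (Av ω = a ∧ Xv ω = x))
        = sEx P (fun ω => h (Wv ω) a x) (fun ω => Av ω = a ∧ Xv ω = x ∧ Uv ω = u) :=
          sEx_congr P _ (fun ω => by tauto)
      _ = sEx P Yv (fun ω => Av ω = a ∧ Xv ω = x ∧ Uv ω = u) := (hA4 x u).symm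
      _ = sEx P Yv (fun ω => Uv ω = u ∧ (Av ω = a ∧ Xv ω = x)) :=
          sEx_congr P _ (fun ω => by tauto)
  have hc5 : ∀ x : X, sEx P (fun ω => q (Zv ω) a x) (fun ω => Av ω = a ∧ Xv ω = x) =
      pr P (fun ω => Av ω = a ∧ Xv ω = x) := by
    intro x
    have hsum : pr P (fun ω => Av ω = !a ∧ Xv ω = x) =
        ∑ u, pr P (fun ω => Av ω = !a ∧ Xv ω = x ∧ Uv ω = u) := by
      rw [pr_fiber P Uv (fun ω => Av ω = !a ∧ Xv ω = x)]
      exact Finset.sum_congr rfl fun u _ => pr_congr P (fun ω => by tauto)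
    apply mul_right_cancel₀ (hposax (!a) x).ne'
    calc sEx P (fun ω => q (Zv ω) a x) (fun ω => Av ω = a ∧ Xv ω = x) *
          pr P (fun ω => Av ω = !a ∧ Xv ω = x)
        = (∑ u, sEx P (fun ω => q (Zv ω) a x) (fun ω => Av ω = a ∧ Xv ω = x ∧ Uv ω = u)) *
            pr P (fun ω => Av ω = !a ∧ Xv ω = x) := by
          congr 1
          rw [sEx_fiber P Uv _ (fun ω => Av ω = a ∧ Xv ω = x)]
          exact Finset.sum_congr rfl fun u _ => sEx_congr P _ (fun ω => by tauto)
      _ = ∑ u, sEx P (fun ω => q (Zv ω) a x) (fun ω => Av ω = a ∧ Xv ω = x ∧ Uv ω = u) *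
            pr P (fun ω => Av ω = !a ∧ Xv ω = x) := Finset.sum_mul _ _ _
      _ = ∑ u, pr P (fun ω => Av ω = !a ∧ Xv ω = x ∧ Uv ω = u) *
            pr P (fun ω => Av ω = a ∧ Xv ω = x) := Finset.sum_congr rfl fun u _ => hA6 x u
      _ = (∑ u, pr P (fun ω => Av ω = !a ∧ Xv ω = x ∧ Uv ω = u)) *
            pr P (fun ω => Av ω = a ∧ Xv ω = x) := (Finset.sum_mul _ _ _).symm
      _ = pr P (fun ω => Av ω = a ∧ Xv ω = x) * pr P (fun ω => Av ω = !a ∧ Xv ω = x) := by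
          rw [← hsum]; ring
  -- odds-ratio pointwise identity
  have hterm : ∀ (x : X) (wz : W × Z),
      h wz.1 a x * q wz.2 a x *
        pr P (fun ω => Wv ω = wz.1 ∧ Zv ω = wz.2 ∧ Av ω = a ∧ Xv ω = x) =
      (cpr P (fun ω => Wv ω = wz.1 ∧ Zv ω = wz.2) (fun ω => Av ω = a ∧ Xv ω = x) /
          (cpr P (fun ω => Wv ω = wz.1) (fun ω => Av ω = a ∧ Xv ω = x) *
            cpr P (fun ω => Zv ω = wz.2) (fun ω => Av ω = a ∧ Xv ω = x))) *
        ((h wz.1 a x * pr P (fun ω => Wv ω = wz.1 ∧ Av ω = a ∧ Xv ω = x)) *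
          (q wz.2 a x * pr P (fun ω => Zv ω = wz.2 ∧ Av ω = a ∧ Xv ω = x)) /
            pr P (fun ω => Av ω = a ∧ Xv ω = x)) := by
    intro x wz
    have n3 := (hposax a x).ne'
    have ewz : cpr P (fun ω => Wv ω = wz.1 ∧ Zv ω = wz.2) (fun ω => Av ω = a ∧ Xv ω = x) =
        pr P (fun ω => Wv ω = wz.1 ∧ Zv ω = wz.2 ∧ Av ω = a ∧ Xv ω = x) /
          pr P (fun ω => Av ω = a ∧ Xv ω = x) := by
      unfold cpr
      rw [pr_congr P (E := fun ω => (Wv ω = wz.1 ∧ Zv ω = wz.2) ∧ (Av ω = a ∧ Xv ω = x))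
        (F := fun ω => Wv ω = wz.1 ∧ Zv ω = wz.2 ∧ Av ω = a ∧ Xv ω = x) (fun ω => by tauto)]
    have ew : cpr P (fun ω => Wv ω = wz.1) (fun ω => Av ω = a ∧ Xv ω = x) =
        pr P (fun ω => Wv ω = wz.1 ∧ Av ω = a ∧ Xv ω = x) /
          pr P (fun ω => Av ω = a ∧ Xv ω = x) := rfl
    have ez : cpr P (fun ω => Zv ω = wz.2) (fun ω => Av ω = a ∧ Xv ω = x) =
        pr P (fun ω => Zv ω = wz.2 ∧ Av ω = a ∧ Xv ω = x) /
          pr P (fun ω => Av ω = a ∧ Xv ω = x) := rfl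
    rw [ewz, ew, ez]
    by_cases hw : pr P (fun ω => Wv ω = wz.1 ∧ Av ω = a ∧ Xv ω = x) = 0
    · have hwz0 : pr P (fun ω => Wv ω = wz.1 ∧ Zv ω = wz.2 ∧ Av ω = a ∧ Xv ω = x) = 0 :=
        le_antisymm (le_trans (pr_mono P hP fun ω hE => ⟨hE.1, hE.2.2⟩) (le_of_eq hw))
          (pr_nonneg P hP _)
      rw [hwz0, hw]; ring
    by_cases hz : pr P (fun ω => Zv ω = wz.2 ∧ Av ω = a ∧ Xv ω = x) = 0
    · have hwz0 : pr P (fun ω => Wv ω = wz.1 ∧ Zv ω = wz.2 ∧ Av ω = a ∧ Xv ω = x) = 0 :=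
        le_antisymm (le_trans (pr_mono P hP fun ω hE => ⟨hE.2.1, hE.2.2⟩) (le_of_eq hz))
          (pr_nonneg P hP _)
      rw [hwz0, hz]; ring
    · field_simp
  -- representation of E[h q | a, x] as a sum over (w,z)
  have hsum_repr : ∀ x : X,
      sEx P (fun ω => h (Wv ω) a x * q (Zv ω) a x) (fun ω => Av ω = a ∧ Xv ω = x) =
      ∑ wz : W × Z, h wz.1 a x * q wz.2 a x *
        pr P (fun ω => Wv ω = wz.1 ∧ Zv ω = wz.2 ∧ Av ω = a ∧ Xv ω = x) := by
    intro x
    rw [sEx_fiber P (fun ω => (Wv ω, Zv ω)) _ (fun ω => Av ω = a ∧ Xv ω = x)]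
    refine Finset.sum_congr rfl fun wz _ => ?_
    refine (sEx_congr P _
      (F := fun ω => Wv ω = wz.1 ∧ Zv ω = wz.2 ∧ Av ω = a ∧ Xv ω = x)
      (fun ω => by rw [Prod.ext_iff]; tauto)).trans ?_
    exact sEx_const P fun ω hE => by rw [hE.1, hE.2.1]
  -- sum of the factorized terms
  have hfac_sum : ∀ x : X,
      ∑ wz : W × Z, (h wz.1 a x * pr P (fun ω => Wv ω = wz.1 ∧ Av ω = a ∧ Xv ω = x)) *
          (q wz.2 a x * pr P (fun ω => Zv ω = wz.2 ∧ Av ω = a ∧ Xv ω = x)) /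
            pr P (fun ω => Av ω = a ∧ Xv ω = x) =
      sEx P Yv (fun ω => Av ω = a ∧ Xv ω = x) := by
    intro x
    have n3 := (hposax a x).ne'
    calc ∑ wz : W × Z, (h wz.1 a x * pr P (fun ω => Wv ω = wz.1 ∧ Av ω = a ∧ Xv ω = x)) *
            (q wz.2 a x * pr P (fun ω => Zv ω = wz.2 ∧ Av ω = a ∧ Xv ω = x)) /
              pr P (fun ω => Av ω = a ∧ Xv ω = x)
        = (∑ wz : W × Z, (h wz.1 a x * pr P (fun ω => Wv ω = wz.1 ∧ Av ω = a ∧ Xv ω = x)) *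
            (q wz.2 a x * pr P (fun ω => Zv ω = wz.2 ∧ Av ω = a ∧ Xv ω = x))) /
              pr P (fun ω => Av ω = a ∧ Xv ω = x) := (Finset.sum_div _ _ _).symm
      _ = (∑ w, h w a x * pr P (fun ω => Wv ω = w ∧ Av ω = a ∧ Xv ω = x)) *
            (∑ z, q z a x * pr P (fun ω => Zv ω = z ∧ Av ω = a ∧ Xv ω = x)) /
              pr P (fun ω => Av ω = a ∧ Xv ω = x) := by
          rw [Finset.sum_mul_sum]
          rw [Fintype.sum_prod_type]
      _ = sEx P (fun ω => h (Wv ω) a x) (fun ω => Av ω = a ∧ Xv ω = x) *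
            sEx P (fun ω => q (Zv ω) a x) (fun ω => Av ω = a ∧ Xv ω = x) /
              pr P (fun ω => Av ω = a ∧ Xv ω = x) := by rw [hSh x, hSq x]
      _ = sEx P Yv (fun ω => Av ω = a ∧ Xv ω = x) := by
          rw [hc4 x, hc5 x, mul_div_assoc, div_self n3, mul_one]
  -- nonnegativity of the factorized terms
  have hfac_nonneg : ∀ (x : X) (wz : W × Z),
      0 ≤ (h wz.1 a x * pr P (fun ω => Wv ω = wz.1 ∧ Av ω = a ∧ Xv ω = x)) *
          (q wz.2 a x * pr P (fun ω => Zv ω = wz.2 ∧ Av ω = a ∧ Xv ω = x)) /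
            pr P (fun ω => Av ω = a ∧ Xv ω = x) := fun x wz =>
    div_nonneg (mul_nonneg (mul_nonneg (hh _ _ _) (pr_nonneg P hP _))
      (mul_nonneg (hq _ _ _) (pr_nonneg P hP _))) (pr_nonneg P hP _)
  -- upper and lower bounds on E[h q | a, x] (unnormalized)
  have hCup : ∀ x : X,
      sEx P (fun ω => h (Wv ω) a x * q (Zv ω) a x) (fun ω => Av ω = a ∧ Xv ω = x) ≤
      (univ.sup' univ_nonempty fun wz : W × Z =>
          cpr P (fun ω => Wv ω = wz.1 ∧ Zv ω = wz.2) (fun ω => Av ω = a ∧ Xv ω = x) /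
            (cpr P (fun ω => Wv ω = wz.1) (fun ω => Av ω = a ∧ Xv ω = x) *
              cpr P (fun ω => Zv ω = wz.2) (fun ω => Av ω = a ∧ Xv ω = x))) *
        sEx P Yv (fun ω => Av ω = a ∧ Xv ω = x) := by
    intro x
    rw [hsum_repr x, ← hfac_sum x, Finset.mul_sum]
    refine Finset.sum_le_sum fun wz _ => ?_
    rw [hterm x wz]
    exact mul_le_mul_of_nonneg_right (Finset.le_sup' (fun wz : W × Z =>
        cpr P (fun ω => Wv ω = wz.1 ∧ Zv ω = wz.2) (fun ω => Av ω = a ∧ Xv ω = x) /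
          (cpr P (fun ω => Wv ω = wz.1) (fun ω => Av ω = a ∧ Xv ω = x) *
            cpr P (fun ω => Zv ω = wz.2) (fun ω => Av ω = a ∧ Xv ω = x))) (Finset.mem_univ wz)) (hfac_nonneg x wz)
  have hClo : ∀ x : X,
      (univ.inf' univ_nonempty fun wz : W × Z =>
          cpr P (fun ω => Wv ω = wz.1 ∧ Zv ω = wz.2) (fun ω => Av ω = a ∧ Xv ω = x) /
            (cpr P (fun ω => Wv ω = wz.1) (fun ω => Av ω = a ∧ Xv ω = x) *
              cpr P (fun ω => Zv ω = wz.2) (fun ω => Av ω = a ∧ Xv ω = x))) *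
        sEx P Yv (fun ω => Av ω = a ∧ Xv ω = x) ≤
      sEx P (fun ω => h (Wv ω) a x * q (Zv ω) a x) (fun ω => Av ω = a ∧ Xv ω = x) := by
    intro x
    rw [hsum_repr x, ← hfac_sum x, Finset.mul_sum]
    refine Finset.sum_le_sum fun wz _ => ?_
    rw [hterm x wz]
    exact mul_le_mul_of_nonneg_right (Finset.inf'_le (fun wz : W × Z =>
        cpr P (fun ω => Wv ω = wz.1 ∧ Zv ω = wz.2) (fun ω => Av ω = a ∧ Xv ω = x) /
          (cpr P (fun ω => Wv ω = wz.1) (fun ω => Av ω = a ∧ Xv ω = x) *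
            cpr P (fun ω => Zv ω = wz.2) (fun ω => Av ω = a ∧ Xv ω = x))) (Finset.mem_univ wz)) (hfac_nonneg x wz)
  -- decomposition of the target conditional expectation over x
  have deco : sEx P Ya (fun ω => Av ω = !a) =
      ∑ x, sEx P Ya (fun ω => Av ω = !a ∧ Xv ω = x) := by
    rw [sEx_fiber P Xv Ya (fun ω => Av ω = !a)]
    exact Finset.sum_congr rfl fun x _ => sEx_congr P Ya (fun ω => by tauto)
  have cprx : ∀ x : X, cpr P (fun ω => Xv ω = x) (fun ω => Av ω = !a) =
      pr P (fun ω => Av ω = !a ∧ Xv ω = x) / pr P (fun ω => Av ω = !a) := by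
    intro x
    unfold cpr
    rw [pr_congr P (E := fun ω => Xv ω = x ∧ Av ω = !a)
      (F := fun ω => Av ω = !a ∧ Xv ω = x) (fun ω => by tauto)]
  constructor
  · -- lower bound
    rw [ce_def, deco, le_div_iff₀ hposA, Finset.sum_mul]
    refine Finset.sum_le_sum fun x _ => ?_
    have n3 := (hposax a x).ne'
    calc (univ.inf' univ_nonempty fun wz : W × Z =>
            cpr P (fun ω => Wv ω = wz.1 ∧ Zv ω = wz.2) (fun ω => Av ω = a ∧ Xv ω = x) /
              (cpr P (fun ω => Wv ω = wz.1) (fun ω => Av ω = a ∧ Xv ω = x) *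
                cpr P (fun ω => Zv ω = wz.2) (fun ω => Av ω = a ∧ Xv ω = x))) *
          ce P Yv (fun ω => Av ω = a ∧ Xv ω = x) *
          cpr P (fun ω => Xv ω = x) (fun ω => Av ω = !a) * pr P (fun ω => Av ω = !a)
        = ((univ.inf' univ_nonempty fun wz : W × Z =>
            cpr P (fun ω => Wv ω = wz.1 ∧ Zv ω = wz.2) (fun ω => Av ω = a ∧ Xv ω = x) /
              (cpr P (fun ω => Wv ω = wz.1) (fun ω => Av ω = a ∧ Xv ω = x) *
                cpr P (fun ω => Zv ω = wz.2) (fun ω => Av ω = a ∧ Xv ω = x))) *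
            sEx P Yv (fun ω => Av ω = a ∧ Xv ω = x)) *
            (pr P (fun ω => Av ω = !a ∧ Xv ω = x) / pr P (fun ω => Av ω = a ∧ Xv ω = x)) := by
          rw [ce_def, cprx x]
          field_simp
      _ ≤ sEx P (fun ω => h (Wv ω) a x * q (Zv ω) a x) (fun ω => Av ω = a ∧ Xv ω = x) *
            (pr P (fun ω => Av ω = !a ∧ Xv ω = x) / pr P (fun ω => Av ω = a ∧ Xv ω = x)) :=
          mul_le_mul_of_nonneg_right (hClo x)
            (div_nonneg (pr_nonneg P hP _) (pr_nonneg P hP _))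
      _ = sEx P Ya (fun ω => Av ω = !a ∧ Xv ω = x) := (hB x).symm
  · -- upper bound
    rw [ce_def, deco, div_le_iff₀ hposA, Finset.sum_mul]
    refine Finset.sum_le_sum fun x _ => ?_
    have n3 := (hposax a x).ne'
    calc sEx P Ya (fun ω => Av ω = !a ∧ Xv ω = x)
        = sEx P (fun ω => h (Wv ω) a x * q (Zv ω) a x) (fun ω => Av ω = a ∧ Xv ω = x) *
            (pr P (fun ω => Av ω = !a ∧ Xv ω = x) / pr P (fun ω => Av ω = a ∧ Xv ω = x)) :=
          hB x
      _ ≤ ((univ.sup' univ_nonempty fun wz : W × Z =>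
            cpr P (fun ω => Wv ω = wz.1 ∧ Zv ω = wz.2) (fun ω => Av ω = a ∧ Xv ω = x) /
              (cpr P (fun ω => Wv ω = wz.1) (fun ω => Av ω = a ∧ Xv ω = x) *
                cpr P (fun ω => Zv ω = wz.2) (fun ω => Av ω = a ∧ Xv ω = x))) *
            sEx P Yv (fun ω => Av ω = a ∧ Xv ω = x)) *
            (pr P (fun ω => Av ω = !a ∧ Xv ω = x) / pr P (fun ω => Av ω = a ∧ Xv ω = x)) :=
          mul_le_mul_of_nonneg_right (hCup x)
            (div_nonneg (pr_nonneg P hP _) (pr_nonneg P hP _))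
      _ = (univ.sup' univ_nonempty fun wz : W × Z =>
            cpr P (fun ω => Wv ω = wz.1 ∧ Zv ω = wz.2) (fun ω => Av ω = a ∧ Xv ω = x) /
              (cpr P (fun ω => Wv ω = wz.1) (fun ω => Av ω = a ∧ Xv ω = x) *
                cpr P (fun ω => Zv ω = wz.2) (fun ω => Av ω = a ∧ Xv ω = x))) *
          ce P Yv (fun ω => Av ω = a ∧ Xv ω = x) *
          cpr P (fun ω => Xv ω = x) (fun ω => Av ω = !a) * pr P (fun ω => Av ω = !a) := by
          rw [ce_def, cprx x]
          field_simp
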